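/- arXiv:2510.16875 — 4 statements merged into one kernel-verified Lean document; each statement's English description precedes it below -/
import Mathlib

section
/- Assume Dubinin's bound: for every complex polynomial F of degree n ≥ 2 and every a ∈ ℂ there exists a critical point b of F (F'(b) = 0) with |(F(a) − F(b))/(a − b)| ≥ |F'(a)|/n² (where the quotient is interpreted as F'(a) if b = a). Then for every odd complex polynomial P of degree d ≥ 3 with P(0) = 0 and P'(0) = 1, there exists a critical point ζ of P with |P(ζ)/ζ| ≥ 1/d. -/
open Polynomial

lemma coeff_comp_neg_X (p : ℂ[X]) (n : ℕ) :
    (p.comp (-X)).coeff n = (-1)^n * p.coeff n := by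
  induction p using Polynomial.induction_on' with
  | add p q hp hq => simp [add_comp, hp, hq, mul_add]
  | monomial m a =>
      rw [monomial_comp, neg_pow, show (-1:ℂ[X])^m * X^m = C ((-1)^m) * X^m by simp,
        ← mul_assoc, ← C_mul]
      simp only [coeff_C_mul, coeff_X_pow, coeff_monomial]
      split_ifs with h <;> simp_all [mul_comm]

theorem stmt_7
    (dubinin : ∀ (F : Polynomial ℂ) (n : ℕ), 2 ≤ n → F.natDegree = n → ∀ a : ℂ,
      ∃ b : ℂ, (Polynomial.derivative F).eval b = 0 ∧
        (if b = a then ‖(Polynomial.derivative F).eval a‖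
          else ‖(F.eval a - F.eval b) / (a - b)‖)
          ≥ ‖(Polynomial.derivative F).eval a‖ / (n : ℝ) ^ 2)
    (P : Polynomial ℂ) (d : ℕ) (hd : 3 ≤ d)
    (hodd : ∀ z : ℂ, P.eval (-z) = -P.eval z)
    (hdeg : P.natDegree = d) (h0 : P.eval 0 = 0)
    (h1 : (Polynomial.derivative P).eval 0 = 1) :
    ∃ ζ : ℂ, (Polynomial.derivative P).eval ζ = 0 ∧
      ‖P.eval ζ / ζ‖ ≥ 1 / (d : ℝ) := by
  set Q : ℂ[X] := P^2 with hQ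
  -- P comp -X = -P
  have hPodd : P.comp (-X) = -P := by
    apply Polynomial.funext; intro z; simp [eval_comp, hodd z]
  -- even coefficients of P vanish
  have hceven : ∀ k : ℕ, P.coeff (2*k) = 0 := by
    intro k
    have := coeff_comp_neg_X P (2*k)
    rw [hPodd] at this
    simp [pow_mul] at this
    linear_combination (-(1:ℂ)/2) * this
  -- odd coefficients of Q vanish
  have hQodd : ∀ m : ℕ, Odd m → Q.coeff m = 0 := by
    intro m hm
    rw [hQ, sq, coeff_mul]
    apply Finset.sum_eq_zero
    intro x hx
    rw [Finset.HasAntidiagonal.mem_antidiagonal] at hx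
    have : Even x.1 ∨ Even x.2 := by
      rcases Nat.even_or_odd x.1 with h | h
      · exact Or.inl h
      · rcases Nat.even_or_odd x.2 with h2 | h2
        · exact Or.inr h2
        · exfalso; rw [← hx] at hm; have := Nat.odd_add.mp hm
          exact (Nat.not_even_iff_odd.mpr h2) (this.mp h)
    rcases this with ⟨t, ht⟩ | ⟨t, ht⟩
    · have : P.coeff x.1 = 0 := by rw [ht, ← two_mul] at *; exact hceven t
      simp [this]
    · have : P.coeff x.2 = 0 := by rw [ht, ← two_mul] at *; exact hceven t
      simp [this]
  -- the even companion polynomial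
  set F : ℂ[X] := ∑ k ∈ Finset.range (d+1), C (Q.coeff (2*k)) * X^k with hF
  have hQdeg : Q.natDegree = 2*d := by rw [hQ, natDegree_pow, hdeg]
  have hcomp : F.comp (X^2) = Q := by
    ext n
    rw [hF]
    have : ((∑ k ∈ Finset.range (d+1), C (Q.coeff (2*k)) * X^k).comp (X^2 : ℂ[X]))
        = ∑ k ∈ Finset.range (d+1), C (Q.coeff (2*k)) * X^(2*k) := by
      rw [Polynomial.sum_comp]
      apply Finset.sum_congr rfl
      intro k _
      rw [mul_comp, C_comp, pow_comp, X_comp, ← pow_mul, mul_comm 2 k]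
    rw [this, finset_sum_coeff]
    simp only [coeff_C_mul, coeff_X_pow]
    rcases Nat.even_or_odd n with ⟨m, hm⟩ | hodd'
    · have hn : n = 2*m := by omega
      subst hn
      have : ∀ k ∈ Finset.range (d+1),
          Q.coeff (2*k) * (if 2*m = 2*k then (1:ℂ) else 0)
          = if m = k then Q.coeff (2*k) else 0 := by
        intro k _
        by_cases h : m = k
        · simp [h]
        · have : ¬ (2*m = 2*k) := by omega
          simp [h, this]
      rw [Finset.sum_congr rfl this, Finset.sum_ite_eq]
      by_cases hmd : m ∈ Finset.range (d+1)
      · simp [hmd]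
      · rw [if_neg hmd]
        rw [Finset.mem_range] at hmd
        have : Q.natDegree < 2*m := by omega
        rw [Polynomial.coeff_eq_zero_of_natDegree_lt this]
    · rw [hQodd n hodd']
      apply Finset.sum_eq_zero
      intro k _
      have : ¬ (n = 2*k) := by rcases hodd' with ⟨t, ht⟩; omega
      simp [this]
  have hPne : P ≠ 0 := fun h => by simp [h] at h1
  have hQne : Q ≠ 0 := pow_ne_zero 2 hPne
  -- coefficients of F
  have hFcoeff : ∀ k, k ≤ d → F.coeff k = Q.coeff (2*k) := by
    intro k hk
    rw [hF, finset_sum_coeff]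
    simp only [coeff_C_mul, coeff_X_pow]
    have : ∀ j ∈ Finset.range (d+1),
        Q.coeff (2*j) * (if k = j then (1:ℂ) else 0) = if k = j then Q.coeff (2*j) else 0 := by
      intro j _; by_cases h : k = j <;> simp [h]
    rw [Finset.sum_congr rfl this, Finset.sum_ite_eq, if_pos (Finset.mem_range.mpr (by omega))]
  have hFd : F.coeff d = Q.coeff (2*d) := hFcoeff d le_rfl
  have hlead : Q.coeff (2*d) ≠ 0 := by
    rw [← hQdeg]; exact Polynomial.leadingCoeff_ne_zero.mpr hQne
  have hFdegle : F.natDegree ≤ d := by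
    rw [hF]
    apply Polynomial.natDegree_sum_le_of_forall_le
    intro k hk
    refine le_trans (Polynomial.natDegree_C_mul_le _ _) ?_
    rw [Polynomial.natDegree_X_pow]
    exact Nat.lt_succ_iff.mp (Finset.mem_range.mp hk)
  have hFdeg : F.natDegree = d :=
    le_antisymm hFdegle (Polynomial.le_natDegree_of_ne_zero (hFd ▸ hlead))
  -- F'(0) = 1
  have hQ2 : Q.coeff 2 = 1 := by
    have hc0 : P.coeff 0 = 0 := by rw [Polynomial.coeff_zero_eq_eval_zero, h0]
    have hc1 : P.coeff 1 = 1 := by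
      have := Polynomial.coeff_derivative P 0
      rw [Polynomial.coeff_zero_eq_eval_zero, h1] at this
      simpa using this.symm
    rw [hQ, sq, coeff_mul, Finset.Nat.sum_antidiagonal_eq_sum_range_succ_mk]
    simp [Finset.sum_range_succ, hc0, hc1]
  have hF1 : (derivative F).eval 0 = 1 := by
    rw [← Polynomial.coeff_zero_eq_eval_zero, Polynomial.coeff_derivative,
      hFcoeff 1 (by omega)]
    simp [hQ2]
  -- Dubinin at 0
  obtain ⟨b, hb1, hb2⟩ := dubinin F d (by omega) hFdeg 0
  have hbne : b ≠ 0 := fun h => by rw [h, hF1] at hb1; exact one_ne_zero hb1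
  rw [if_neg hbne, hF1] at hb2
  have hF0 : F.eval 0 = 0 := by
    have := congrArg (Polynomial.eval (0:ℂ)) hcomp
    rw [Polynomial.eval_comp] at this
    simp [hQ, h0] at this ⊢
    convert this using 2 <;> simp
  rw [hF0] at hb2
  have hb2' : ‖F.eval b / b‖ ≥ 1 / (d:ℝ)^2 := by
    have : (0 - F.eval b) / (0 - b) = F.eval b / b := by
      rw [zero_sub, zero_sub, neg_div_neg_eq]
    rw [this] at hb2
    simpa using hb2
  -- square root of b
  obtain ⟨ζ, hζ⟩ := IsAlgClosed.exists_pow_nat_eq b (n := 2) (by norm_num)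
  have hζne : ζ ≠ 0 := fun h => hbne (by rw [← hζ, h]; ring)
  have hevalF : F.eval b = (P.eval ζ)^2 := by
    have := congrArg (Polynomial.eval ζ) hcomp
    rw [Polynomial.eval_comp] at this
    simp only [eval_pow, eval_X] at this
    rw [hζ] at this
    rw [this, hQ, eval_pow]
  -- derivative relation
  have hderiv : (derivative F).eval b * (2*ζ) = 2 * P.eval ζ * (derivative P).eval ζ := by
    have hdc := congrArg derivative hcomp
    rw [Polynomial.derivative_comp] at hdc
    have := congrArg (Polynomial.eval ζ) hdc
    rw [hQ] at this
    simp only [eval_mul, eval_comp, eval_pow, eval_X, derivative_pow, derivative_X,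
      eval_C, Polynomial.eval_natCast, eval_ofNat, mul_one, pow_one] at this
    rw [hζ] at this
    linear_combination this
  have hPP : P.eval ζ * (derivative P).eval ζ = 0 := by
    have h2 : (2:ℂ) * ζ ≠ 0 := by simp [hζne]
    have := hderiv
    rw [hb1, zero_mul] at this
    linear_combination -this / 2
  rcases mul_eq_zero.mp hPP with hPz | hPz
  · exfalso
    rw [hevalF, hPz] at hb2'
    simp at hb2'
    have hdn : 0 < d := by omega
    have hd0 : (0:ℝ) < (d:ℝ) := by exact_mod_cast hdn
    nlinarith
  · refine ⟨ζ, hPz, ?_⟩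
    rw [hevalF, ← hζ] at hb2'
    have habs : ‖(P.eval ζ)^2 / ζ^2‖ = (‖P.eval ζ / ζ‖)^2 := by
      rw [← div_pow, norm_pow]
    rw [habs] at hb2'
    have h1d : (1:ℝ)/(d:ℝ)^2 = (1/(d:ℝ))^2 := by
      rw [div_pow]; norm_num
    rw [h1d] at hb2'
    have hx : 0 ≤ ‖P.eval ζ / ζ‖ := norm_nonneg _
    nlinarith [hb2', hx]
end

section
/- Assume Dubinin's bound: for every complex polynomial F of degree n ≥ 2 and every a ∈ ℂ there exists a critical point b of F with |(F(a) − F(b))/(a − b)| ≥ |F'(a)|/n². Let P be a complex polynomial of degree d ≥ 2 with P(0) = 0, P'(0) = 1, and suppose there is a primitive k-th root of unity λ (k ≥ 2) with P(λz) = λ·P(z) for all z. Then there exists a critical point ζ of P with |P(ζ)/ζ| ≥ d^(−2/k). -/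
open Polynomial

private lemma comp_C_mul_X_coeff' (G : Polynomial ℂ) (c : ℂ) (n : ℕ) :
    (G.comp (Polynomial.C c * Polynomial.X)).coeff n = c ^ n * G.coeff n := by
  induction G using Polynomial.induction_on' with
  | add p q hp hq => simp [Polynomial.add_comp, hp, hq, mul_add]
  | monomial i a =>
    rw [Polynomial.monomial_comp, mul_pow, ← Polynomial.C_pow, ← mul_assoc, ← Polynomial.C_mul,
      Polynomial.coeff_C_mul, Polynomial.coeff_X_pow, Polynomial.coeff_monomial]
    split_ifs with h1 h2 <;> simp_all <;> ring

theorem stmt_8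
    (dubinin : ∀ (F : Polynomial ℂ) (n : ℕ), 2 ≤ n → F.natDegree = n → ∀ a : ℂ,
      ∃ b : ℂ, (Polynomial.derivative F).eval b = 0 ∧
        (if b = a then ‖(Polynomial.derivative F).eval a‖
          else ‖(F.eval a - F.eval b) / (a - b)‖)
          ≥ ‖(Polynomial.derivative F).eval a‖ / (n : ℝ) ^ 2)
    (P : Polynomial ℂ) (d : ℕ) (hd : 2 ≤ d)
    (hdeg : P.natDegree = d) (h0 : P.eval 0 = 0)
    (h1 : (Polynomial.derivative P).eval 0 = 1)
    (k : ℕ) (hk : 2 ≤ k) (lam : ℂ) (hlam : IsPrimitiveRoot lam k)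
    (hsym : ∀ z : ℂ, P.eval (lam * z) = lam * P.eval z) :
    ∃ ζ : ℂ, (Polynomial.derivative P).eval ζ = 0 ∧
      ‖P.eval ζ / ζ‖ ≥ (d : ℝ) ^ (-(2 : ℝ) / (k : ℝ)) := by
  have hk0 : k ≠ 0 := by omega
  have hkpos : 0 < k := by omega
  -- coefficient 1 of P is 1
  have hc1 : P.coeff 1 = 1 := by
    have h := Polynomial.coeff_derivative P 0
    rw [Polynomial.coeff_zero_eq_eval_zero, h1] at h
    simpa using h.symm
  set G : Polynomial ℂ := P ^ k with hG
  have hGsym : ∀ z, G.eval (lam * z) = G.eval z := by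
    intro z
    simp [hG, Polynomial.eval_pow, hsym z, mul_pow, hlam.pow_eq_one]
  have hGcomp : G.comp (Polynomial.C lam * Polynomial.X) = G :=
    Polynomial.funext fun z => by
      simp [Polynomial.eval_comp, hGsym z]
  have hGcoeff : ∀ n, ¬ k ∣ n → G.coeff n = 0 := by
    intro n hn
    have h := congrArg (fun f => Polynomial.coeff f n) hGcomp
    simp only [comp_C_mul_X_coeff'] at h
    have hne : lam ^ n ≠ 1 := fun he => hn ((hlam.pow_eq_one_iff_dvd n).1 he)
    have : (lam ^ n - 1) * G.coeff n = 0 := by rw [sub_mul, one_mul, h, sub_self]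
    rcases mul_eq_zero.1 this with h' | h'
    · exact absurd (by linear_combination h') hne
    · exact h'
  set F : Polynomial ℂ := Polynomial.contract k G with hF
  have hFexp : Polynomial.expand ℂ k F = G := by
    ext n
    rw [Polynomial.coeff_expand hkpos]
    split_ifs with h
    · rw [hF, Polynomial.coeff_contract hk0, Nat.div_mul_cancel h]
    · exact (hGcoeff n h).symm
  have hFeval : ∀ z : ℂ, F.eval (z ^ k) = (P.eval z) ^ k := by
    intro z
    have h := Polynomial.expand_eval k F z
    rw [hFexp] at h
    rw [← h, hG, Polynomial.eval_pow]
  have hP0 : P ≠ 0 := by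
    intro h; rw [h, Polynomial.natDegree_zero] at hdeg; omega
  have hFdeg : F.natDegree = d := by
    have h2 := Polynomial.natDegree_expand k F
    rw [hFexp, hG, Polynomial.natDegree_pow, hdeg] at h2
    exact Nat.eq_of_mul_eq_mul_right hkpos (h2.symm.trans (mul_comm k d))
  -- P = X * divX P
  have hPX : P = Polynomial.X * P.divX := by
    have h := P.X_mul_divX_add
    rw [Polynomial.coeff_zero_eq_eval_zero, h0, map_zero, add_zero] at h
    exact h.symm
  have hF1 : F.coeff 1 = 1 := by
    rw [hF, Polynomial.coeff_contract hk0, one_mul]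
    have : G = Polynomial.X ^ k * (P.divX) ^ k := by
      rw [hG]; conv_lhs => rw [hPX]
      rw [mul_pow]
    rw [this]
    have h := Polynomial.coeff_X_pow_mul ((P.divX) ^ k) k 0
    rw [zero_add] at h
    rw [h, Polynomial.coeff_zero_eq_eval_zero, Polynomial.eval_pow,
      ← Polynomial.coeff_zero_eq_eval_zero, Polynomial.coeff_divX, zero_add, hc1, one_pow]
  have hFd0 : (Polynomial.derivative F).eval 0 = 1 := by
    rw [← Polynomial.coeff_zero_eq_eval_zero, Polynomial.coeff_derivative, hF1]
    simp
  obtain ⟨b, hb, hbd⟩ := dubinin F d hd hFdeg 0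
  have hbne : b ≠ 0 := by
    intro h; rw [h, hFd0] at hb; exact one_ne_zero hb
  rw [if_neg hbne, hFd0, norm_one] at hbd
  have hF0 : F.eval 0 = 0 := by
    have h := hFeval 0
    rw [h0, zero_pow hk0] at h
    exact h
  rw [hF0] at hbd
  -- take a k-th root of b
  obtain ⟨ζ, hζ⟩ := IsAlgClosed.exists_pow_nat_eq (k := ℂ) b hkpos
  have hζ0 : ζ ≠ 0 := by
    intro h; apply hbne; rw [← hζ, h, zero_pow hk0]
  -- the key algebraic identity
  have hratio : (P.eval ζ / ζ) ^ k = (0 - F.eval b) / (0 - b) := by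
    rw [zero_sub, zero_sub, neg_div_neg_eq, ← hζ, hFeval ζ, div_pow]
  -- chain rule: derivative of G at ζ vanishes
  have hGd : (Polynomial.derivative G).eval ζ = 0 := by
    rw [← hFexp, Polynomial.expand_eq_comp_X_pow, Polynomial.derivative_comp,
      Polynomial.eval_mul, Polynomial.eval_comp, Polynomial.eval_pow, Polynomial.eval_X,
      hζ, hb, mul_zero]
  have hprod : (k : ℂ) * (P.eval ζ) ^ (k - 1) * (Polynomial.derivative P).eval ζ = 0 := by
    rw [hG, Polynomial.derivative_pow] at hGd
    simpa using hGd
  -- P(ζ) ≠ 0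
  have hPζ : P.eval ζ ≠ 0 := by
    intro h
    have hFb : F.eval b = 0 := by rw [← hζ, hFeval ζ, h, zero_pow hk0]
    rw [hFb, sub_zero, zero_div, norm_zero] at hbd
    have hdp : (0:ℝ) < (d:ℝ) := by exact_mod_cast (by omega : 0 < d)
    have : (0:ℝ) < 1 / (d:ℝ) ^ 2 := by positivity
    linarith
  have hcrit : (Polynomial.derivative P).eval ζ = 0 := by
    rcases mul_eq_zero.1 hprod with h' | h'
    · exfalso
      rcases mul_eq_zero.1 h' with h'' | h''
      · exact (Nat.cast_ne_zero (R := ℂ)).2 hk0 h''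
      · exact hPζ (pow_eq_zero_iff (by omega) |>.1 h'')
    · exact h'
  refine ⟨ζ, hcrit, ?_⟩
  -- final real inequality
  have habs : ‖P.eval ζ / ζ‖ ^ k = ‖(0 - F.eval b) / (0 - b)‖ := by
    rw [← norm_pow, hratio]
  have hx0 : (0:ℝ) ≤ ‖P.eval ζ / ζ‖ := norm_nonneg _
  have hd1 : (1:ℝ) ≤ (d:ℝ) := by exact_mod_cast Nat.one_le_of_lt hd
  have hdpos : (0:ℝ) < (d:ℝ) := lt_of_lt_of_le one_pos hd1
  have hrpow : ((d:ℝ) ^ (-(2:ℝ) / (k:ℝ))) ^ k = 1 / (d:ℝ) ^ 2 := by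
    rw [← Real.rpow_natCast ((d:ℝ) ^ (-(2:ℝ) / (k:ℝ))) k, ← Real.rpow_mul hdpos.le,
      div_mul_cancel₀, Real.rpow_neg hdpos.le, Real.rpow_two, one_div]
    exact_mod_cast hk0
  have hkey : ((d:ℝ) ^ (-(2:ℝ) / (k:ℝ))) ^ k ≤ ‖P.eval ζ / ζ‖ ^ k := by
    rw [hrpow, habs]
    exact hbd
  exact (pow_le_pow_iff_left₀ (Real.rpow_nonneg hdpos.le _) hx0 hk0).1 hkey
end

section
/- Assume that for every complex polynomial F of degree n ≥ 2 with F(0) = 0 and F'(0) = 1 there exists a critical point b of F with |F(b)/b| ≥ 1/n (the full Dual Smale conjecture). Then for every odd polynomial P of degree d ≥ 3 with P(0) = 0 and P'(0) = 1 there exists a critical point ζ of P with |P(ζ)/ζ| ≥ 1/√d. -/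
open Polynomial

theorem stmt_16
    (dualSmale : ∀ (F : Polynomial ℂ) (n : ℕ), 2 ≤ n → F.natDegree = n →
      F.eval 0 = 0 → (Polynomial.derivative F).eval 0 = 1 →
      ∃ b : ℂ, (Polynomial.derivative F).eval b = 0 ∧
        ‖F.eval b / b‖ ≥ 1 / (n : ℝ))
    (P : Polynomial ℂ) (d : ℕ) (hd : 3 ≤ d)
    (hodd : ∀ z : ℂ, P.eval (-z) = -P.eval z)
    (hdeg : P.natDegree = d) (h0 : P.eval 0 = 0)
    (h1 : (Polynomial.derivative P).eval 0 = 1) :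
    ∃ ζ : ℂ, (Polynomial.derivative P).eval ζ = 0 ∧
      ‖P.eval ζ / ζ‖ ≥ 1 / Real.sqrt d := by
  -- P ≠ 0
  have hPne : P ≠ 0 := by
    intro h; rw [h] at h1; simp at h1
  -- polynomial identity P.comp(-X) = -P
  have hcomp : P.comp (-X) = -P := by
    apply Polynomial.funext
    intro r
    simp [eval_comp, hodd r]
  -- coefficient formula for comp with -X
  have hcoeffneg : ∀ (p : ℂ[X]) (n : ℕ), (p.comp (-X)).coeff n = (-1) ^ n * p.coeff n := by
    intro p n
    induction p using Polynomial.induction_on' with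
    | add p q hp hq => simp [add_comp, hp, hq, mul_add]
    | monomial k a =>
      rw [monomial_comp, neg_pow, ← C_1, ← C_neg, ← C_pow, ← mul_assoc, ← C_mul,
        coeff_C_mul, coeff_X_pow, coeff_monomial]
      rcases eq_or_ne k n with rfl | h
      · simp [mul_comm]
      · simp [h, Ne.symm h]
  -- even coefficients vanish
  have heven : ∀ n : ℕ, Even n → P.coeff n = 0 := by
    intro n hn
    have h2 := congrArg (fun p : ℂ[X] => p.coeff n) hcomp
    simp only [coeff_neg, hcoeffneg, hn.neg_one_pow, one_mul] at h2
    linear_combination h2 / 2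
  -- leading coefficient nonzero
  have hlead : P.coeff d ≠ 0 := by
    rw [← hdeg]
    exact mt Polynomial.leadingCoeff_eq_zero.mp hPne
  -- d is odd
  have hdodd : Odd d := by
    rcases Nat.even_or_odd d with h | h
    · exact absurd (heven d h) hlead
    · exact h
  obtain ⟨m, hm⟩ := hdodd
  -- P.coeff 1 = 1
  have hc1 : P.coeff 1 = 1 := by
    have := h1
    rw [← Polynomial.coeff_zero_eq_eval_zero, Polynomial.coeff_derivative] at this
    simpa using this
  -- build Q from the odd coefficients
  set Q : ℂ[X] := ∑ k ∈ Finset.range (m + 1), monomial k (P.coeff (2 * k + 1)) with hQ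
  have hQcoeff : ∀ j : ℕ, Q.coeff j = if j ≤ m then P.coeff (2 * j + 1) else 0 := by
    intro j
    rw [hQ, Polynomial.finset_sum_coeff]
    simp only [coeff_monomial]
    rw [Finset.sum_ite_eq' (Finset.range (m + 1)) j (fun k => P.coeff (2 * k + 1))]
    simp [Nat.lt_succ_iff]
  have hQm : Q.coeff m ≠ 0 := by
    rw [hQcoeff]; simpa [← hm] using hlead
  have hQne : Q ≠ 0 := fun h => hQm (by simp [h])
  have hQdeg : Q.natDegree = m := by
    apply le_antisymm
    · apply Polynomial.natDegree_sum_le_of_forall_le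
      intro k hk
      exact le_trans (Polynomial.natDegree_monomial_le _) (Nat.lt_succ_iff.mp (Finset.mem_range.mp hk))
    · exact Polynomial.le_natDegree_of_ne_zero hQm
  -- P = X * Q.comp (X^2)
  have hPQ : P = X * Q.comp (X ^ 2) := by
    have hQc : Q.comp (X ^ 2) = ∑ k ∈ Finset.range (m + 1), monomial (2 * k) (P.coeff (2 * k + 1)) := by
      rw [hQ]
      rw [Polynomial.sum_comp]
      apply Finset.sum_congr rfl
      intro k _
      rw [monomial_comp, ← pow_mul, ← C_mul_X_pow_eq_monomial, mul_comm 2 k]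
    rw [hQc, Finset.mul_sum]
    apply Polynomial.ext
    intro n
    rw [Polynomial.finset_sum_coeff]
    have hterm : ∀ k, (X * monomial (2 * k) (P.coeff (2 * k + 1))).coeff n
        = if 2 * k + 1 = n then P.coeff (2 * k + 1) else 0 := by
      intro k
      rw [← Polynomial.monomial_one_one_eq_X, Polynomial.monomial_mul_monomial, one_mul,
        add_comm 1 (2 * k), coeff_monomial]
    simp only [hterm]
    rcases Nat.even_or_odd n with hn | hn
    · rw [Finset.sum_eq_zero, heven n hn]
      intro k _
      have : 2 * k + 1 ≠ n := by
        rcases hn with ⟨t, ht⟩; omega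
      simp [this]
    · obtain ⟨j, hj⟩ := hn
      have hiff : ∀ k, (2 * k + 1 = n) ↔ (k = j) := by intro k; omega
      simp only [hiff]
      rw [Finset.sum_ite_eq' (Finset.range (m + 1)) j (fun k => P.coeff (2 * k + 1))]
      rcases le_or_gt j m with hjm | hjm
      · simp [Nat.lt_succ_iff, hjm, ← hj]
      · have hnd : d < n := by omega
        rw [Polynomial.coeff_eq_zero_of_natDegree_lt (by omega : P.natDegree < n)]
        simp [Nat.lt_succ_iff, not_le.mpr hjm]
  -- define H
  set H : ℂ[X] := X * Q ^ 2 with hH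
  have hHcomp : H.comp (X ^ 2) = P ^ 2 := by
    rw [hH, mul_comp, pow_comp, X_comp, hPQ]
    ring
  have hHdeg : H.natDegree = d := by
    rw [hH, Polynomial.natDegree_mul Polynomial.X_ne_zero (pow_ne_zero 2 hQne),
      Polynomial.natDegree_X, Polynomial.natDegree_pow, hQdeg]
    omega
  have hH0 : H.eval 0 = 0 := by simp [hH]
  have hQ0 : Q.eval 0 = 1 := by
    rw [← Polynomial.coeff_zero_eq_eval_zero, hQcoeff]
    simp [hc1]
  have hH1 : (Polynomial.derivative H).eval 0 = 1 := by
    rw [hH, Polynomial.derivative_mul, Polynomial.derivative_X]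
    simp [hQ0]
  -- apply the dual Smale conjecture to H
  obtain ⟨b, hb1, hb2⟩ := dualSmale H d (by omega) hHdeg hH0 hH1
  -- b ≠ 0
  have hbne : b ≠ 0 := by
    intro h; rw [h, hH1] at hb1; exact one_ne_zero hb1
  -- pick a square root ζ of b
  obtain ⟨ζ, hζ⟩ := IsAlgClosed.exists_pow_nat_eq b (n := 2) (by norm_num)
  have hζne : ζ ≠ 0 := by
    intro h; rw [h] at hζ; simp at hζ; exact hbne hζ.symm
  -- P(ζ)^2 = H(b)
  have hPζ : P.eval ζ ^ 2 = H.eval b := by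
    have := congrArg (fun p : ℂ[X] => p.eval ζ) hHcomp
    simpa [eval_comp, hζ] using this.symm
  -- positivity of the bound
  have hdpos : (0:ℝ) < 1 / (d:ℝ) := by
    apply div_pos one_pos; exact_mod_cast (by omega : 0 < d)
  have hHbne : H.eval b ≠ 0 := by
    have hpos : (0:ℝ) < ‖H.eval b / b‖ := lt_of_lt_of_le hdpos hb2
    intro h
    rw [h, zero_div, norm_zero] at hpos
    exact lt_irrefl _ hpos
  have hPζne : P.eval ζ ≠ 0 := by
    intro h; rw [h] at hPζ; exact hHbne (by simpa using hPζ.symm)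
  -- derivative vanishes at ζ
  have hder : (Polynomial.derivative P).eval ζ = 0 := by
    have hdiff := congrArg Polynomial.derivative hHcomp
    rw [Polynomial.derivative_comp] at hdiff
    simp only [Polynomial.derivative_sq] at hdiff
    have hev := congrArg (fun p : ℂ[X] => p.eval ζ) hdiff
    simp only [Polynomial.derivative_X, eval_mul, eval_comp, eval_C, eval_X, eval_pow, eval_one, mul_one,
      hζ, hb1, mul_zero, zero_mul] at hev
    have h2 : (2 : ℂ) * P.eval ζ ≠ 0 := by
      simp [hPζne]
    rcases mul_eq_zero.mp hev.symm with h | h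
    · exact absurd h h2
    · exact h
  refine ⟨ζ, hder, ?_⟩
  -- the inequality
  have habs : ‖P.eval ζ / ζ‖ ^ 2 = ‖H.eval b / b‖ := by
    rw [← norm_pow, div_pow, hPζ, ← hζ]
  have h1d : (1:ℝ) / d ≤ ‖P.eval ζ / ζ‖ ^ 2 := by
    rw [habs]; exact hb2
  have := Real.sqrt_le_sqrt h1d
  rw [Real.sqrt_sq (norm_nonneg _)] at this
  calc (1:ℝ) / Real.sqrt d = Real.sqrt (1 / d) := by
        rw [Real.sqrt_div one_pos.le, Real.sqrt_one]
    _ ≤ _ := this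
end

section
/- Let Q be a complex polynomial with Q(0) = 1, H(u) = u·Q(u)², and suppose d ≥ 3 and there exists a critical point w of H with |H(w)/w| ≥ 1/d² (w ≠ 0). Then the odd polynomial P(z) = z·Q(z²) has a critical point c with |P(c)/c| ≥ 1/d. -/
open Polynomial

theorem stmt_17 (Q : Polynomial ℂ) (hQ0 : Q.eval 0 = 1) (d : ℝ) (hd : 3 ≤ d)
    (w : ℂ) (hw : w ≠ 0)
    (hcrit : (Polynomial.derivative (X * Q ^ 2)).eval w = 0)
    (hH : ‖(X * Q ^ 2).eval w / w‖ ≥ 1 / d ^ 2) :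
    ∃ c : ℂ, (Polynomial.derivative (X * Q.comp (X ^ 2))).eval c = 0 ∧
      ‖(X * Q.comp (X ^ 2)).eval c / c‖ ≥ 1 / d := by
  have hd0 : (0:ℝ) < d := by linarith
  -- Q(w) ≠ 0
  have hQw : Q.eval w ≠ 0 := by
    intro h
    have : ‖(X * Q ^ 2).eval w / w‖ = 0 := by
      simp [h]
    rw [this] at hH
    have : (0:ℝ) < 1 / d ^ 2 := by positivity
    linarith
  -- from hcrit: Q(w) + 2 w Q'(w) = 0
  have hcrit' : Q.eval w + 2 * w * (derivative Q).eval w = 0 := by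
    simp only [derivative_mul, derivative_X, derivative_pow, eval_add, eval_mul, eval_one,
      eval_X, eval_pow, eval_natCast, eval_C, eval_ofNat, one_mul, Nat.cast_ofNat] at hcrit
    have : Q.eval w * (Q.eval w + 2 * w * (derivative Q).eval w) = 0 := by
      ring_nf
      ring_nf at hcrit
      linear_combination hcrit
    rcases mul_eq_zero.mp this with h | h
    · exact absurd h hQw
    · exact h
  obtain ⟨c, hc⟩ : ∃ c : ℂ, c ^ 2 = w := IsAlgClosed.exists_pow_nat_eq w zero_lt_two
  have hc0 : c ≠ 0 := by
    intro h; apply hw; rw [← hc, h]; ring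
  refine ⟨c, ?_, ?_⟩
  · simp only [derivative_mul, derivative_X, derivative_comp, derivative_pow, derivative_X,
      eval_add, eval_mul, eval_one, eval_comp, eval_pow, eval_X, one_mul, eval_natCast, eval_C, eval_ofNat,
      Nat.cast_ofNat, hc]
    linear_combination hcrit' + 2 * (derivative Q).eval w * hc
  · have hPc : (X * Q.comp (X ^ 2)).eval c / c = Q.eval w := by
      rw [eval_mul, eval_comp, eval_pow, eval_X, hc]
      field_simp
    rw [hPc]
    have habs : ‖(X * Q ^ 2).eval w / w‖ = ‖Q.eval w‖ ^ 2 := by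
      rw [eval_mul, eval_pow, eval_X, mul_comm, mul_div_assoc, div_self hw, mul_one, norm_pow]
    rw [habs] at hH
    have h1 : (1 / d) ^ 2 ≤ ‖Q.eval w‖ ^ 2 := by
      rw [div_pow, one_pow]; exact hH
    have := abs_le_abs (le_of_lt (lt_of_lt_of_le (by positivity : (0:ℝ) < 1/d)
      (by nlinarith [norm_nonneg (Q.eval w), sq_abs (1/d)] : 1/d ≤ ‖Q.eval w‖))) ?_
    · nlinarith [norm_nonneg (Q.eval w)]
    · nlinarith [norm_nonneg (Q.eval w)]
end
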